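/- Let n be a positive integer and let S and T be finite subsets of ℚ^n. Then the intersection of the ℤ≥0-span of S with the ℤ≥0-span of T is a finite set if and only if the ℝ≥0-span of S and the ℝ≥0-span of T (inside ℝ^n) intersect only in the zero vector. -/

import Mathlib

/-- The ℤ≥0-span of a set `S ⊆ ℚ^n`: all finite sums `∑ aᵢ • sᵢ` with `aᵢ ∈ ℕ`, `sᵢ ∈ S`. -/
def zSpanQ {n : ℕ} (S : Set (Fin n → ℚ)) : Set (Fin n → ℚ) :=
  {x | ∃ (k : ℕ) (a : Fin k → ℕ) (s : Fin k → (Fin n → ℚ)),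
    (∀ i, s i ∈ S) ∧ x = ∑ i, (a i : ℚ) • s i}

/-- The inclusion `ℚ^n ⊆ ℝ^n`. -/
def ratToReal {n : ℕ} (v : Fin n → ℚ) : EuclideanSpace ℝ (Fin n) :=
  WithLp.toLp 2 (fun i => (v i : ℝ))

/-- The ℝ≥0-span of a set `S ⊆ ℚ^n`, viewed inside `ℝ^n`. -/
def rSpanQ {n : ℕ} (S : Set (Fin n → ℚ)) : Set (EuclideanSpace ℝ (Fin n)) :=
  {x | ∃ (k : ℕ) (a : Fin k → ℝ) (s : Fin k → (Fin n → ℚ)),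
    (∀ i, s i ∈ S) ∧ (∀ i, 0 ≤ a i) ∧ x = ∑ i, a i • ratToReal (s i)}

open Matrix Module

lemma ker_rat_dense {ι κ : Type*} [Fintype ι] [Fintype κ] (A : Matrix κ ι ℚ)
    (z : ι → ℝ) (hz : (A.map (fun q : ℚ => (q : ℝ))).mulVec z = 0)
    {U : Set (ι → ℝ)} (hU : IsOpen U) (hzU : z ∈ U) :
    ∃ q : ι → ℚ, A.mulVec q = 0 ∧ (fun i => (q i : ℝ)) ∈ U := by
  classical
  set V : Submodule ℚ ℝ := Submodule.span ℚ (Set.range z) with hV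
  haveI : FiniteDimensional ℚ V := FiniteDimensional.span_of_finite ℚ (Set.finite_range z)
  set m := finrank ℚ V
  let b : Basis (Fin m) ℚ V := finBasis ℚ V
  let ζ : ι → V := fun i => ⟨z i, Submodule.subset_span (Set.mem_range_self i)⟩
  let c : Fin m → ι → ℚ := fun t i => b.repr (ζ i) t
  have hker : ∀ t, A.mulVec (c t) = 0 := by
    intro t
    funext r
    have h0 : (∑ i, A r i • ζ i) = 0 := by
      apply Subtype.coe_injective
      push_cast
      have := congrFun hz r
      show ∑ x, (A r x : ℝ) * z x = 0
      simpa [Matrix.mulVec, dotProduct, Rat.smul_def, mul_comm] using this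
    have : b.repr (∑ i, A r i • ζ i) t = 0 := by rw [h0]; simp
    simpa [Matrix.mulVec, dotProduct, c, map_sum, Finsupp.smul_apply, Rat.smul_def]
      using this
  have hzdecomp : ∀ i, z i = ∑ t, ((b t : ℝ)) * (c t i : ℝ) := by
    intro i
    have := b.sum_repr (ζ i)
    have := congrArg (Subtype.val) this
    push_cast at this
    show (ζ i : ℝ) = _
    rw [← this]
    simp [c, Rat.smul_def, mul_comm]
  let g : (Fin m → ℝ) → (ι → ℝ) := fun r i => ∑ t, r t * (c t i : ℝ)
  have hg : Continuous g := by
    apply continuous_pi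
    intro i
    exact continuous_finset_sum _ fun t _ => (continuous_apply t).mul continuous_const
  have hgz : g (fun t => (b t : ℝ)) = z := by
    funext i; rw [hzdecomp i]
  have hopen : IsOpen (g ⁻¹' U) := hU.preimage hg
  have hmem : (fun t => ((b t : ℝ))) ∈ g ⁻¹' U := by
    simp only [Set.mem_preimage, hgz]; exact hzU
  obtain ⟨ε, hε, hball⟩ := Metric.isOpen_iff.mp hopen _ hmem
  have hrat : ∀ t : Fin m, ∃ p : ℚ, |(b t : ℝ) - p| < ε := fun t => exists_rat_near _ hε
  choose p hp using hrat
  have hpball : (fun t => (p t : ℝ)) ∈ Metric.ball (fun t => ((b t : ℝ))) ε := by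
    rw [Metric.mem_ball]
    rcases isEmpty_or_nonempty (Fin m) with h | h
    · simpa [dist_pi_def] using hε
    · rw [dist_pi_lt_iff hε]
      intro t
      rw [Real.dist_eq, abs_sub_comm]
      exact hp t
  have hpU : g (fun t => (p t : ℝ)) ∈ U := hball hpball
  refine ⟨fun i => ∑ t, p t * c t i, ?_, ?_⟩
  · have : (fun i => ∑ t, p t * c t i) = ∑ t, p t • c t := by
      funext i; simp [Finset.sum_apply]
    rw [this]
    have : A.mulVec (∑ t, p t • c t) = ∑ t, p t • A.mulVec (c t) := by
      simp [Matrix.mulVec_sum, Matrix.mulVec_smul]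
    rw [this]
    simp [hker]
  · convert hpU using 1
    funext i
    push_cast
    rfl

lemma euclid_sum_apply {n : ℕ} {α : Type*} (s : Finset α) (f : α → EuclideanSpace ℝ (Fin n))
    (j : Fin n) : (∑ i ∈ s, f i) j = ∑ i ∈ s, f i j :=
  by rw [WithLp.ofLp_sum, Finset.sum_apply]

lemma ratToReal_eq_zero_iff {n : ℕ} {v : Fin n → ℚ} : ratToReal v = 0 ↔ v = 0 := by
  constructor
  · intro h
    funext i
    have := congrArg (fun w => w i) h
    simpa [ratToReal] using this
  · rintro rfl
    ext i
    simp [ratToReal]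

lemma zero_mem_rSpanQ {n : ℕ} (S : Set (Fin n → ℚ)) : (0 : EuclideanSpace ℝ (Fin n)) ∈ rSpanQ S := by
  refine ⟨0, Fin.elim0, Fin.elim0, fun i => i.elim0, fun i => i.elim0, ?_⟩
  simp

lemma ratToReal_mem_rSpanQ {n : ℕ} {S : Set (Fin n → ℚ)} {x : Fin n → ℚ}
    (hx : x ∈ zSpanQ S) : ratToReal x ∈ rSpanQ S := by
  obtain ⟨k, a, s, hs, rfl⟩ := hx
  refine ⟨k, fun i => (a i : ℝ), s, hs, fun i => by positivity, ?_⟩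
  ext j
  rw [euclid_sum_apply]
  simp only [ratToReal, Finset.sum_apply, Pi.smul_apply, smul_eq_mul]
  push_cast
  rfl

lemma rSpanQ_coeffs {n : ℕ} {S : Set (Fin n → ℚ)} (hS : S.Finite)
    {x : EuclideanSpace ℝ (Fin n)} (hx : x ∈ rSpanQ S) :
    ∃ c : (Fin n → ℚ) → ℝ, (∀ v, 0 ≤ c v) ∧ x = ∑ v ∈ hS.toFinset, c v • ratToReal v := by
  classical
  obtain ⟨k, a, s, hs, ha, rfl⟩ := hx
  refine ⟨fun v => ∑ i ∈ Finset.univ.filter (fun i => s i = v), a i,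
    fun v => Finset.sum_nonneg fun i _ => ha i, ?_⟩
  rw [← Finset.sum_fiberwise_of_maps_to (g := s) (fun i _ => hS.mem_toFinset.mpr (hs i))]
  refine Finset.sum_congr rfl fun v _ => ?_
  rw [Finset.sum_smul]
  refine Finset.sum_congr rfl fun i hi => ?_
  rw [Finset.mem_filter] at hi
  rw [hi.2]

lemma mem_zSpanQ_of_coeffs {n : ℕ} {S : Set (Fin n → ℚ)} (hS : S.Finite)
    (a : ↥(hS.toFinset) → ℕ) :
    (∑ v : ↥(hS.toFinset), (a v : ℚ) • (↑v : Fin n → ℚ)) ∈ zSpanQ S := by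
  classical
  refine ⟨hS.toFinset.card, fun i => a (hS.toFinset.equivFin.symm i),
    fun i => ↑(hS.toFinset.equivFin.symm i),
    fun i => hS.mem_toFinset.mp (hS.toFinset.equivFin.symm i).2, ?_⟩
  simpa using (Equiv.sum_comp hS.toFinset.equivFin.symm
    (fun v => (a v : ℚ) • (↑v : Fin n → ℚ))).symm

lemma row_ite_sum {ι : Type*} [Fintype ι] [DecidableEq ι] {K : Type*} [NonAssocSemiring K]
    (P : Prop) [Decidable P] (i : ι) (w : ι → K) :
    ∑ i', (if P ∧ i' = i then (1 : K) else 0) * w i' = if P then w i else 0 := by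
  by_cases h : P
  · simp [h]
  · simp [h]

/-- For finite sets `S, T ⊆ ℚ^n`, the intersection of the ℤ≥0-spans is finite
iff the ℝ≥0-spans (inside `ℝ^n`) intersect only in `0`. -/
theorem stmt4 (n : ℕ) (hn : 0 < n) (S T : Set (Fin n → ℚ)) (hS : S.Finite) (hT : T.Finite) :
    (zSpanQ S ∩ zSpanQ T).Finite ↔ rSpanQ S ∩ rSpanQ T = {0} := by
  classical
  constructor
  · intro hfin
    apply Set.eq_of_subset_of_subset
    · rintro x ⟨hxS, hxT⟩
      rw [Set.mem_singleton_iff]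
      by_contra hx0
      obtain ⟨c, hc0, hcx⟩ := rSpanQ_coeffs hS hxS
      obtain ⟨d, hd0, hdx⟩ := rSpanQ_coeffs hT hxT
      set F := hS.toFinset with hF
      set G := hT.toFinset with hG
      set z : (↥F ⊕ ↥G) → ℝ := Sum.elim (fun v => c ↑v) (fun w => d ↑w) with hzdef
      set A : Matrix (Fin n ⊕ (↥F ⊕ ↥G)) (↥F ⊕ ↥G) ℚ := Sum.elim
        (fun j => Sum.elim (fun v => (↑v : Fin n → ℚ) j) (fun w => -((↑w : Fin n → ℚ) j)))
        (fun i => fun i' => if z i = 0 ∧ i' = i then 1 else 0) with hAdef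
      have hxjS : ∀ j, x j = ∑ v : ↥F, ((↑v : Fin n → ℚ) j : ℝ) * c ↑v := by
        intro j
        rw [hcx, euclid_sum_apply, ← Finset.sum_coe_sort F]
        refine Finset.sum_congr rfl fun v _ => ?_
        simp [ratToReal, mul_comm]
      have hxjT : ∀ j, x j = ∑ w : ↥G, ((↑w : Fin n → ℚ) j : ℝ) * d ↑w := by
        intro j
        rw [hdx, euclid_sum_apply, ← Finset.sum_coe_sort G]
        refine Finset.sum_congr rfl fun w _ => ?_
        simp [ratToReal, mul_comm]
      have hz : (A.map (fun q : ℚ => (q : ℝ))).mulVec z = 0 := by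
        funext r
        cases r with
        | inl j =>
          have step : (A.map (fun q : ℚ => (q : ℝ))).mulVec z (Sum.inl j)
              = ∑ i' : (↥F ⊕ ↥G), ((A (Sum.inl j) i' : ℚ) : ℝ) * z i' := rfl
          show (A.map (fun q : ℚ => (q : ℝ))).mulVec z (Sum.inl j) = 0
          rw [step, Fintype.sum_sum_type]
          simp only [hAdef, hzdef, Sum.elim_inl, Sum.elim_inr, Rat.cast_neg, neg_mul]
          rw [Finset.sum_neg_distrib, ← hxjS j, ← hxjT j]
          simp
        | inr i =>
          have step : (A.map (fun q : ℚ => (q : ℝ))).mulVec z (Sum.inr i)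
              = ∑ i' : (↥F ⊕ ↥G), ((if z i = 0 ∧ i' = i then (1 : ℚ) else 0 : ℚ) : ℝ) * z i' :=
            rfl
          show (A.map (fun q : ℚ => (q : ℝ))).mulVec z (Sum.inr i) = 0
          rw [step]
          simp only [apply_ite (fun q : ℚ => (q : ℝ)), Rat.cast_one, Rat.cast_zero]
          rw [row_ite_sum]
          by_cases h : z i = 0 <;> simp [h]
      set U : Set ((↥F ⊕ ↥G) → ℝ) :=
        {w | (∀ i, z i ≠ 0 → 0 < w i) ∧ (∑ v : ↥F, w (Sum.inl v) • ratToReal (↑v : Fin n → ℚ)) ≠ 0} with hUdef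
      have hUopen : IsOpen U := by
        have h1 : IsOpen {w : (↥F ⊕ ↥G) → ℝ | ∀ i, z i ≠ 0 → 0 < w i} := by
          have he : {w : (↥F ⊕ ↥G) → ℝ | ∀ i, z i ≠ 0 → 0 < w i}
              = ⋂ i, {w : (↥F ⊕ ↥G) → ℝ | z i ≠ 0 → 0 < w i} := by
            ext w; simp [Set.mem_iInter]
          rw [he]
          refine isOpen_iInter_of_finite fun i => ?_
          by_cases h : z i = 0
          · have : {w : (↥F ⊕ ↥G) → ℝ | z i ≠ 0 → 0 < w i} = Set.univ := by
              ext w; simp [h]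
            rw [this]; exact isOpen_univ
          · have : {w : (↥F ⊕ ↥G) → ℝ | z i ≠ 0 → 0 < w i} = {w | 0 < w i} := by
              ext w; simp [h]
            rw [this]; exact isOpen_lt continuous_const (continuous_apply i)
        have h2 : Continuous (fun w : (↥F ⊕ ↥G) → ℝ => ∑ v : ↥F, w (Sum.inl v) • ratToReal (↑v : Fin n → ℚ)) :=
          continuous_finset_sum _ fun v _ => (continuous_apply (Sum.inl v)).smul continuous_const
        have he : U = {w : (↥F ⊕ ↥G) → ℝ | ∀ i, z i ≠ 0 → 0 < w i}
            ∩ ((fun w : (↥F ⊕ ↥G) → ℝ => ∑ v : ↥F, w (Sum.inl v) • ratToReal (↑v : Fin n → ℚ)) ⁻¹' {0}ᶜ) := by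
          ext w
          simp [hUdef]
        rw [he]
        exact h1.inter (isOpen_compl_singleton.preimage h2)
      have hzU : z ∈ U := by
        constructor
        · intro i h
          have h0 : 0 ≤ z i := by
            cases i with
            | inl v => exact hc0 ↑v
            | inr w => exact hd0 ↑w
          exact lt_of_le_of_ne h0 (Ne.symm h)
        · have : (∑ v : ↥F, z (Sum.inl v) • ratToReal (↑v : Fin n → ℚ)) = x := by
            rw [hcx, ← Finset.sum_coe_sort F (fun v => c v • ratToReal v)]
            rfl
          rw [this]
          exact hx0
      obtain ⟨q, hq, hqU⟩ := ker_rat_dense A z hz hUopen hzU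
      have hq0 : ∀ i, z i = 0 → q i = 0 := by
        intro i h
        have step : A.mulVec q (Sum.inr i)
            = ∑ i' : (↥F ⊕ ↥G), (if z i = 0 ∧ i' = i then (1 : ℚ) else 0) * q i' := rfl
        have h2 := congrFun hq (Sum.inr i)
        rw [step, row_ite_sum, if_pos h] at h2
        exact h2
      have hqpos : ∀ i, 0 ≤ q i := by
        intro i
        by_cases h : z i = 0
        · rw [hq0 i h]
        · have h3 : (0 : ℝ) < ((q i : ℝ)) := hqU.1 i h
          exact_mod_cast h3.le
      set yS : Fin n → ℚ := ∑ v : ↥F, q (Sum.inl v) • (↑v : Fin n → ℚ) with hySdef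
      set yT : Fin n → ℚ := ∑ w : ↥G, q (Sum.inr w) • (↑w : Fin n → ℚ) with hyTdef
      have hyeq : yS = yT := by
        funext j
        have step : A.mulVec q (Sum.inl j)
            = ∑ i' : (↥F ⊕ ↥G), A (Sum.inl j) i' * q i' := rfl
        have h1 := congrFun hq (Sum.inl j)
        rw [step, Fintype.sum_sum_type] at h1
        simp only [hAdef, Sum.elim_inl, Sum.elim_inr, neg_mul, Pi.zero_apply] at h1
        simp only [hySdef, hyTdef, Finset.sum_apply, Pi.smul_apply, smul_eq_mul]
        rw [Finset.sum_neg_distrib] at h1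
        have h2 : (∑ v : ↥F, (↑v : Fin n → ℚ) j * q (Sum.inl v))
            + -∑ w : ↥G, ((↑w : Fin n → ℚ) j * q (Sum.inr w)) = 0 := h1
        have := eq_of_sub_eq_zero (by linarith :
          (∑ v : ↥F, (↑v : Fin n → ℚ) j * q (Sum.inl v))
            - ∑ w : ↥G, ((↑w : Fin n → ℚ) j * q (Sum.inr w)) = 0)
        calc ∑ v : ↥F, q (Sum.inl v) * (↑v : Fin n → ℚ) j
            = ∑ v : ↥F, (↑v : Fin n → ℚ) j * q (Sum.inl v) := by
              exact Finset.sum_congr rfl fun v _ => mul_comm _ _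
          _ = ∑ w : ↥G, (↑w : Fin n → ℚ) j * q (Sum.inr w) := this
          _ = ∑ w : ↥G, q (Sum.inr w) * (↑w : Fin n → ℚ) j := by
              exact Finset.sum_congr rfl fun w _ => mul_comm _ _
      have hyS0 : yS ≠ 0 := by
        intro h
        apply hqU.2
        have he : (∑ v : ↥F, ((q (Sum.inl v) : ℝ)) • ratToReal (↑v : Fin n → ℚ))
            = ratToReal yS := by
          ext j
          rw [euclid_sum_apply]
          simp only [ratToReal, hySdef, Finset.sum_apply, Pi.smul_apply, smul_eq_mul]
          push_cast
          rfl
        rw [he, h]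
        exact ratToReal_eq_zero_iff.mpr rfl
      -- clear denominators
      set N : ℕ := ∏ i : (↥F ⊕ ↥G), (q i).den with hNdef
      have hNpos : 0 < N := Finset.prod_pos fun i _ => (q i).pos
      have hint : ∀ i : (↥F ⊕ ↥G), ∃ a : ℕ, (a : ℚ) = (N : ℚ) * q i := by
        intro i
        obtain ⟨k, hk⟩ := Finset.dvd_prod_of_mem (fun i => (q i).den) (Finset.mem_univ i)
        have hnum : 0 ≤ (q i).num := Rat.num_nonneg.mpr (hqpos i)
        have hden : ((q i).den : ℚ) ≠ 0 := by exact_mod_cast (q i).den_nz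
        have hmul : ((q i).den : ℚ) * q i = ((q i).num : ℚ) := by
          rw [mul_comm]
          nth_rewrite 1 [← Rat.num_div_den (q i)]
          rw [div_mul_cancel₀ _ hden]
        rw [← hNdef] at hk
        refine ⟨k * (q i).num.toNat, ?_⟩
        calc ((k * (q i).num.toNat : ℕ) : ℚ)
            = (k : ℚ) * ((q i).num : ℚ) := by
              push_cast
              congr 1
              exact_mod_cast Int.toNat_of_nonneg hnum
          _ = (k : ℚ) * (((q i).den : ℚ) * q i) := by rw [hmul]
          _ = (N : ℚ) * q i := by rw [hk]; push_cast; ring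
      choose a ha using hint
      set y : Fin n → ℚ := (N : ℚ) • yS with hydef
      have hy0 : y ≠ 0 := by
        apply smul_ne_zero _ hyS0
        exact_mod_cast hNpos.ne'
      have hymemS : ∀ m : ℕ, ((m : ℚ)) • y ∈ zSpanQ S := by
        intro m
        have he : ((m : ℚ)) • y = ∑ v : ↥F, ((m * a (Sum.inl v) : ℕ) : ℚ) • (↑v : Fin n → ℚ) := by
          rw [hydef, hySdef, Finset.smul_sum, Finset.smul_sum]
          refine Finset.sum_congr rfl fun v _ => ?_
          rw [smul_smul, smul_smul]
          congr 1
          push_cast [ha (Sum.inl v)]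
          ring
        rw [he]
        exact mem_zSpanQ_of_coeffs hS _
      have hymemT : ∀ m : ℕ, ((m : ℚ)) • y ∈ zSpanQ T := by
        intro m
        have he : ((m : ℚ)) • y = ∑ w : ↥G, ((m * a (Sum.inr w) : ℕ) : ℚ) • (↑w : Fin n → ℚ) := by
          rw [hydef, hyeq, hyTdef, Finset.smul_sum, Finset.smul_sum]
          refine Finset.sum_congr rfl fun w _ => ?_
          rw [smul_smul, smul_smul]
          congr 1
          push_cast [ha (Sum.inr w)]
          ring
        rw [he]
        exact mem_zSpanQ_of_coeffs hT _
      have hinj : Function.Injective (fun m : ℕ => ((m : ℚ)) • y) := by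
        intro m l hml
        have := smul_left_injective ℚ hy0 hml
        exact_mod_cast this
      have hinf : (zSpanQ S ∩ zSpanQ T).Infinite :=
        Set.infinite_of_injective_forall_mem (s := zSpanQ S ∩ zSpanQ T)
          (f := fun m : ℕ => ((m : ℚ)) • y) hinj (fun m => ⟨hymemS m, hymemT m⟩)
      exact hinf hfin
    · rintro x hx
      rw [Set.mem_singleton_iff] at hx
      subst hx
      exact ⟨zero_mem_rSpanQ S, zero_mem_rSpanQ T⟩
  · intro heq
    apply Set.Finite.subset (Set.finite_singleton (0 : Fin n → ℚ))
    rintro x ⟨hxS, hxT⟩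
    have hmem : ratToReal x ∈ rSpanQ S ∩ rSpanQ T :=
      ⟨ratToReal_mem_rSpanQ hxS, ratToReal_mem_rSpanQ hxT⟩
    rw [heq, Set.mem_singleton_iff] at hmem
    exact ratToReal_eq_zero_iff.mp hmem
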